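/- Let N ≥ 2. For each n ≥ 1 let μ_0^{(n)} be a probability measure on the scaled discrete simplex Δ_{N−1}(n) ⊆ Δ_{N−1}, and let μ_0 be a probability measure on Δ_{N−1}. If μ_0^{(n)} converges weakly to μ_0 as n → ∞, then for every k ∈ ℕ the time-k marginal μ_0^{(n)} P_n^k of the scaled discrete coagulation–fragmentation chain converges weakly, as n → ∞, to the time-k marginal μ_0 K^k of the continuous coagulation–fragmentation chain. -/

import Mathlib

open MeasureTheory Filter
open scoped ENNReal NNReal Topology

/-- The coagulation–fragmentation map `T_{i,j,u}` on `ℝ^N`: the `i`-th coordinate of the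
output is `u (x_i + x_j)`, the `j`-th coordinate is `(1-u)(x_i + x_j)`, and all other
coordinates are unchanged. -/
noncomputable def cfT (N : ℕ) (i j : Fin N) (u : ℝ) (x : Fin N → ℝ) : Fin N → ℝ :=
  Function.update (Function.update x i (u * (x i + x j))) j ((1 - u) * (x i + x j))

/-- The coagulation–fragmentation kernel on the simplex `Δ_{N-1}`, viewed as a
measure-valued map: `K(x, A) = (1/(N(N-1))) ∑_{(i,j) : i ≠ j} Leb{u ∈ [0,1] : T_{i,j,u}(x) ∈ A}`. -/
noncomputable def cfK (N : ℕ) (x : Fin N → ℝ) : Measure (Fin N → ℝ) :=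
  ((N : ℝ≥0∞) * ((N : ℝ≥0∞) - 1))⁻¹ •
    ∑ p ∈ Finset.univ.filter (fun p : Fin N × Fin N => p.1 ≠ p.2),
      (volume.restrict (Set.Icc (0 : ℝ) 1)).map (fun u => cfT N p.1 p.2 u x)

/-- The uniform distribution on the simplex `Δ_{N-1}`: the `(N-1)`-dimensional Hausdorff
measure restricted to `Δ_{N-1}` and normalized to be a probability measure. -/
noncomputable def uniformSimplex (N : ℕ) : Measure (Fin N → ℝ) :=
  (μH[(N : ℝ) - 1] (stdSimplex ℝ (Fin N)))⁻¹ •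
    μH[(N : ℝ) - 1].restrict (stdSimplex ℝ (Fin N))

/-- Iterated action of a (measure-valued) Markov transition `κ` on an initial
distribution: `evolve κ k μ = μ κ^k` is the time-`k` marginal of the chain with initial
distribution `μ` and transition kernel `κ`. -/
noncomputable def evolve {α : Type*} [MeasurableSpace α] (κ : α → Measure α) :
    ℕ → Measure α → Measure α
  | 0, μ => μ
  | k + 1, μ => (evolve κ k μ).bind κ

/-- The scaled discrete simplex `Δ_{N-1}(n) = {x ∈ Δ_{N-1} : n x_i ∈ ℕ for all i}`. -/
def discSimplex (N n : ℕ) : Set (Fin N → ℝ) :=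
  {x ∈ stdSimplex ℝ (Fin N) | ∀ i, ∃ k : ℕ, x i = (k : ℝ) / n}

/-- One step of the scaled discrete coagulation–fragmentation chain on `Δ_{N-1}(n)`,
viewed as a measure-valued map on `ℝ^N`: an ordered pair `(i,j)` of distinct indices is
chosen uniformly; if `y_i + y_j ≥ 1/n` the `i`-th coordinate is replaced by `k/n` with `k`
uniform on `{0, …, n(y_i+y_j)-1}` and the `j`-th coordinate by `y_i + y_j - k/n`; if
`y_i + y_j = 0` the state is unchanged. -/
noncomputable def cfKd (N n : ℕ) (y : Fin N → ℝ) : Measure (Fin N → ℝ) :=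
  ((N : ℝ≥0∞) * ((N : ℝ≥0∞) - 1))⁻¹ •
    ∑ p ∈ Finset.univ.filter (fun p : Fin N × Fin N => p.1 ≠ p.2),
      (if ⌊(n : ℝ) * (y p.1 + y p.2)⌋₊ = 0 then Measure.dirac y
        else ((⌊(n : ℝ) * (y p.1 + y p.2)⌋₊ : ℝ≥0∞))⁻¹ •
          ∑ k ∈ Finset.range ⌊(n : ℝ) * (y p.1 + y p.2)⌋₊,
            Measure.dirac (Function.update (Function.update y p.1 ((k : ℝ) / n)) p.2
              (y p.1 + y p.2 - (k : ℝ) / n)))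

/-- If the initial distributions `μₙ` of the scaled discrete coagulation–fragmentation
chains converge weakly to an initial distribution `μ₀` on the simplex, then for every
time `k` the time-`k` marginals of the discrete chains converge weakly to the time-`k`
marginal of the continuous coagulation–fragmentation chain. -/

lemma cfT_apply (N : ℕ) (i j : Fin N) (hij : i ≠ j) (u : ℝ) (x : Fin N → ℝ) (l : Fin N) :
    cfT N i j u x l = if l = j then (1 - u) * (x i + x j)
      else if l = i then u * (x i + x j) else x l := by
  unfold cfT
  rcases eq_or_ne l j with rfl | hlj
  · simp
  · rcases eq_or_ne l i with rfl | hli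
    · simp [Function.update_of_ne hlj, hij]
    · simp [Function.update_of_ne hlj, Function.update_of_ne hli, hli, hlj]

lemma continuous_cfT (N : ℕ) (i j : Fin N) (hij : i ≠ j) :
    Continuous (fun p : ℝ × (Fin N → ℝ) => cfT N i j p.1 p.2) := by
  apply continuous_pi
  intro l
  have : (fun p : ℝ × (Fin N → ℝ) => cfT N i j p.1 p.2 l)
      = fun p : ℝ × (Fin N → ℝ) => if l = j then (1 - p.1) * (p.2 i + p.2 j)
        else if l = i then p.1 * (p.2 i + p.2 j) else p.2 l := by
    funext p; exact cfT_apply N i j hij p.1 p.2 l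
  rw [this]
  split_ifs <;> fun_prop

lemma sum_update_update {N : ℕ} (x : Fin N → ℝ) {i j : Fin N} (hij : i ≠ j) (a b : ℝ) :
    ∑ l, Function.update (Function.update x i a) j b l = ∑ l, x l - x i - x j + a + b := by
  classical
  have hj : ∑ l, Function.update (Function.update x i a) j b l
      = b + ∑ l ∈ Finset.univ \ {j}, Function.update x i a l :=
    Finset.sum_update_of_mem (Finset.mem_univ j) _ _
  have hi : ∑ l ∈ Finset.univ \ {j}, Function.update x i a l
      = a + ∑ l ∈ (Finset.univ \ {j}) \ {i}, x l := by
    rw [Finset.sum_update_of_mem (by simp [hij])]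
  have hx : ∑ l, x l = x j + (x i + ∑ l ∈ (Finset.univ \ {j}) \ {i}, x l) := by
    rw [Finset.sum_eq_sum_sdiff_singleton_add (Finset.mem_univ j) x,
      Finset.sum_eq_sum_sdiff_singleton_add (s := Finset.univ \ {j}) (i := i) (by simp [hij]) x]
    ring
  rw [hj, hi, hx]; ring

lemma cfT_mem_simplex {N : ℕ} {i j : Fin N} (hij : i ≠ j) {u : ℝ} (hu : u ∈ Set.Icc (0:ℝ) 1)
    {x : Fin N → ℝ} (hx : x ∈ stdSimplex ℝ (Fin N)) : cfT N i j u x ∈ stdSimplex ℝ (Fin N) := by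
  obtain ⟨hx0, hx1⟩ := hx
  constructor
  · intro l
    rw [cfT_apply N i j hij]
    split_ifs
    · exact mul_nonneg (by linarith [hu.2]) (add_nonneg (hx0 i) (hx0 j))
    · exact mul_nonneg hu.1 (add_nonneg (hx0 i) (hx0 j))
    · exact hx0 l
  · unfold cfT
    rw [sum_update_update x hij, hx1]; ring

lemma updtwo_mem_simplex {N : ℕ} {i j : Fin N} (hij : i ≠ j) {x : Fin N → ℝ}
    (hx : x ∈ stdSimplex ℝ (Fin N)) {a : ℝ} (ha : 0 ≤ a) (hab : a ≤ x i + x j) :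
    Function.update (Function.update x i a) j (x i + x j - a) ∈ stdSimplex ℝ (Fin N) := by
  obtain ⟨hx0, hx1⟩ := hx
  constructor
  · intro l
    rcases eq_or_ne l j with rfl | hlj
    · simp; linarith
    · rcases eq_or_ne l i with rfl | hli
      · simp [Function.update_of_ne hlj, ha]
      · simpa [Function.update_of_ne hlj, Function.update_of_ne hli] using hx0 l
  · rw [sum_update_update x hij, hx1]; ring

section Kernel
variable (N : ℕ)

abbrev cfPairs : Finset (Fin N × Fin N) := Finset.univ.filter (fun p : Fin N × Fin N => p.1 ≠ p.2)

lemma cfPairs_card : (cfPairs N).card = N * N - N := by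
  classical
  have : cfPairs N = (Finset.univ : Finset (Fin N)).offDiag := by
    ext p; simp [Finset.mem_offDiag]
  rw [this, Finset.offDiag_card]
  simp

lemma ennreal_card (hN : 2 ≤ N) : ((cfPairs N).card : ℝ≥0∞) = (N : ℝ≥0∞) * ((N : ℝ≥0∞) - 1) := by
  rw [cfPairs_card]
  have h1 : N * N - N = N * (N - 1) := by rw [Nat.mul_sub, Nat.mul_one]
  rw [h1, Nat.cast_mul, ENNReal.natCast_sub, Nat.cast_one]

lemma cfFactor_mul (hN : 2 ≤ N) :
    ((N : ℝ≥0∞) * ((N : ℝ≥0∞) - 1))⁻¹ * ((cfPairs N).card : ℝ≥0∞) = 1 := by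
  rw [ennreal_card N hN]
  refine ENNReal.inv_mul_cancel ?_ ?_
  · refine mul_ne_zero (by exact_mod_cast by omega) ?_
    have : (2 : ℝ≥0∞) ≤ (N : ℝ≥0∞) := by exact_mod_cast hN
    intro h
    rw [tsub_eq_zero_iff_le] at h
    have := h.trans_lt (lt_of_lt_of_le (by norm_num) this)
    exact lt_irrefl _ this
  · exact ENNReal.mul_ne_top (ENNReal.natCast_ne_top N) (by
      exact ne_top_of_le_ne_top (ENNReal.natCast_ne_top N) (tsub_le_self.trans le_rfl))

lemma cfFactor_toReal (hN : 2 ≤ N) :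
    (((N : ℝ≥0∞) * ((N : ℝ≥0∞) - 1))⁻¹).toReal = (((N * N - N : ℕ) : ℝ))⁻¹ := by
  rw [← ennreal_card N hN, cfPairs_card, ENNReal.toReal_inv]
  rfl

instance : IsProbabilityMeasure (volume.restrict (Set.Icc (0:ℝ) 1)) := by
  constructor
  rw [Measure.restrict_apply_univ, Real.volume_Icc]
  norm_num

lemma measurable_cfT_right {i j : Fin N} (hij : i ≠ j) (u : ℝ) :
    Measurable (fun x : Fin N → ℝ => cfT N i j u x) :=
  ((continuous_cfT N i j hij).comp (continuous_const.prodMk continuous_id)).measurable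

lemma measurable_cfT_left {i j : Fin N} (hij : i ≠ j) (x : Fin N → ℝ) :
    Measurable (fun u : ℝ => cfT N i j u x) :=
  ((continuous_cfT N i j hij).comp (continuous_id.prodMk continuous_const)).measurable

lemma measurable_cfK : Measurable (cfK N) := by
  apply Measure.measurable_of_measurable_coe
  intro s hs
  have : (fun x => cfK N x s) = fun x =>
      ((N : ℝ≥0∞) * ((N : ℝ≥0∞) - 1))⁻¹ *
        ∑ p ∈ cfPairs N, (volume.restrict (Set.Icc (0 : ℝ) 1))
          {u : ℝ | cfT N p.1 p.2 u x ∈ s} := by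
    funext x
    rw [cfK, Measure.smul_apply, Measure.finset_sum_apply, smul_eq_mul]
    congr 1
    refine Finset.sum_congr rfl (fun p hp => ?_)
    have hij : p.1 ≠ p.2 := by simpa using (Finset.mem_filter.1 hp).2
    rw [Measure.map_apply (measurable_cfT_left N hij x) hs]
    rfl
  rw [this]
  refine Measurable.const_mul (Finset.measurable_sum _ (fun p hp => ?_)) _
  have hij : p.1 ≠ p.2 := by simpa using (Finset.mem_filter.1 hp).2
  have hE : MeasurableSet {q : (Fin N → ℝ) × ℝ | cfT N p.1 p.2 q.2 q.1 ∈ s} := by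
    refine (((continuous_cfT N p.1 p.2 hij).comp
      (continuous_snd.prodMk continuous_fst)).measurable) hs
  have := measurable_measure_prodMk_left (ν := volume.restrict (Set.Icc (0:ℝ) 1)) hE
  simpa [Set.preimage] using this

lemma cfK_prob (hN : 2 ≤ N) (x : Fin N → ℝ) : IsProbabilityMeasure (cfK N x) := by
  constructor
  rw [cfK, Measure.smul_apply, Measure.finset_sum_apply, smul_eq_mul]
  have : ∀ p ∈ cfPairs N,
      ((volume.restrict (Set.Icc (0 : ℝ) 1)).map (fun u => cfT N p.1 p.2 u x)) Set.univ = 1 := by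
    intro p hp
    have hij : p.1 ≠ p.2 := by simpa using (Finset.mem_filter.1 hp).2
    rw [Measure.map_apply (measurable_cfT_left N hij x) MeasurableSet.univ]
    simp [Real.volume_Icc]
  rw [Finset.sum_congr rfl this, Finset.sum_const, nsmul_eq_mul, mul_one]
  exact cfFactor_mul N hN

lemma cfK_supp {x : Fin N → ℝ} (hx : x ∈ stdSimplex ℝ (Fin N)) :
    cfK N x (stdSimplex ℝ (Fin N))ᶜ = 0 := by
  rw [cfK, Measure.smul_apply, Measure.finset_sum_apply]
  have : ∀ p ∈ cfPairs N,
      ((volume.restrict (Set.Icc (0 : ℝ) 1)).map (fun u => cfT N p.1 p.2 u x))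
        (stdSimplex ℝ (Fin N))ᶜ = 0 := by
    intro p hp
    have hij : p.1 ≠ p.2 := by simpa using (Finset.mem_filter.1 hp).2
    rw [Measure.map_apply (measurable_cfT_left N hij x)
      (isClosed_stdSimplex ℝ (Fin N)).measurableSet.compl]
    rw [Measure.restrict_apply ((measurable_cfT_left N hij x)
      (isClosed_stdSimplex ℝ (Fin N)).measurableSet.compl)]
    convert measure_empty
    · ext u
      simp only [Set.mem_inter_iff, Set.mem_preimage, Set.mem_compl_iff, Set.mem_empty_iff_false,
        iff_false, not_and]
      intro h hu
      exact h (cfT_mem_simplex hij hu hx)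
    · infer_instance
  rw [Finset.sum_congr rfl this]
  simp

/-- integral formula for cfK -/
lemma integral_cfK (hN : 2 ≤ N) (f : BoundedContinuousFunction (Fin N → ℝ) ℝ) (x : Fin N → ℝ) :
    ∫ y, f y ∂(cfK N x) = (((N * N - N : ℕ) : ℝ))⁻¹ *
      ∑ p ∈ cfPairs N, ∫ u in Set.Icc (0:ℝ) 1, f (cfT N p.1 p.2 u x) := by
  rw [cfK, integral_smul_measure]
  have htr : (((N : ℝ≥0∞) * ((N : ℝ≥0∞) - 1))⁻¹).toReal = (((N * N - N : ℕ) : ℝ))⁻¹ := by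
    rw [← ennreal_card N hN, cfPairs_card, ENNReal.toReal_inv]
    rfl
  rw [htr, smul_eq_mul]
  congr 1
  rw [integral_finset_sum_measure]
  · refine Finset.sum_congr rfl (fun p hp => ?_)
    have hij : p.1 ≠ p.2 := by simpa using (Finset.mem_filter.1 hp).2
    rw [integral_map (measurable_cfT_left N hij x).aemeasurable
      f.continuous.measurable.aestronglyMeasurable]
  · intro p hp
    have hij : p.1 ≠ p.2 := by simpa using (Finset.mem_filter.1 hp).2
    haveI : IsProbabilityMeasure ((volume.restrict (Set.Icc (0 : ℝ) 1)).map
        (fun u => cfT N p.1 p.2 u x)) :=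
      Measure.isProbabilityMeasure_map (measurable_cfT_left N hij x).aemeasurable
    exact f.integrable _

lemma continuous_integral_cfK (hN : 2 ≤ N) (f : BoundedContinuousFunction (Fin N → ℝ) ℝ) :
    Continuous (fun x => ∫ y, f y ∂(cfK N x)) := by
  have : (fun x => ∫ y, f y ∂(cfK N x)) = fun x => (((N * N - N : ℕ) : ℝ))⁻¹ *
      ∑ p ∈ cfPairs N, ∫ u in Set.Icc (0:ℝ) 1, f (cfT N p.1 p.2 u x) := by
    funext x; exact integral_cfK N hN f x
  rw [this]
  refine Continuous.mul continuous_const (continuous_finset_sum _ (fun p hp => ?_))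
  have hij : p.1 ≠ p.2 := by simpa using (Finset.mem_filter.1 hp).2
  refine continuous_of_dominated (bound := fun _ => ‖f‖) ?_ ?_ ?_ ?_
  · intro x
    exact (f.continuous.comp ((continuous_cfT N p.1 p.2 hij).comp
      (continuous_id.prodMk continuous_const))).aestronglyMeasurable
  · intro x
    exact Eventually.of_forall (fun u => f.norm_coe_le_norm _)
  · exact integrable_const _
  · exact Eventually.of_forall (fun u => f.continuous.comp ((continuous_cfT N p.1 p.2 hij).comp
      (continuous_const.prodMk continuous_id)))

lemma norm_integral_cfK_le (hN : 2 ≤ N) (f : BoundedContinuousFunction (Fin N → ℝ) ℝ)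
    (x : Fin N → ℝ) : ‖∫ y, f y ∂(cfK N x)‖ ≤ ‖f‖ := by
  haveI := cfK_prob N hN x
  refine (norm_integral_le_of_norm_le_const
    (Eventually.of_forall (fun y => f.norm_coe_le_norm y))).trans ?_
  simp

end Kernel


variable {α : Type*} [MeasurableSpace α]

lemma bind_prob (μ : Measure α) [IsProbabilityMeasure μ] (κ : α → Measure α)
    (hκ : Measurable κ) (hκp : ∀ x, IsProbabilityMeasure (κ x)) :
    IsProbabilityMeasure (μ.bind κ) := by
  constructor
  rw [Measure.bind_apply MeasurableSet.univ hκ.aemeasurable]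
  simp [fun x => (hκp x).measure_univ]

lemma bind_supp (μ : Measure α) [IsProbabilityMeasure μ] (κ : α → Measure α)
    (hκ : Measurable κ) {D : Set α} (hD : MeasurableSet D) (hμD : μ D = 1)
    (hκD : ∀ x ∈ D, κ x Dᶜ = 0) : (μ.bind κ) Dᶜ = 0 := by
  rw [Measure.bind_apply hD.compl hκ.aemeasurable]
  have hae : ∀ᵐ x ∂μ, x ∈ D := by
    have hc : μ Dᶜ = 0 := by
      rw [measure_compl hD (measure_ne_top μ D), hμD, measure_univ, tsub_self]
    exact ae_iff.2 hc
  have : ∫⁻ x, κ x Dᶜ ∂μ = ∫⁻ _, 0 ∂μ :=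
    lintegral_congr_ae (hae.mono fun x hx => hκD x hx)
  simpa using this

lemma integral_bind_of_bounded (μ : Measure α) [IsProbabilityMeasure μ] (κ : α → Measure α)
    (hκ : Measurable κ) (hκp : ∀ x, IsProbabilityMeasure (κ x)) (f : α → ℝ)
    (hf : Measurable f) {C : ℝ} (hC : 0 ≤ C) (hb : ∀ x, |f x| ≤ C) :
    ∫ x, f x ∂(μ.bind κ) = ∫ x, ∫ y, f y ∂(κ x) ∂μ := by
  haveI := bind_prob μ κ hκ hκp
  have hbn : ∀ x, ‖f x‖ ≤ C := fun x => by simpa using hb x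
  have hint : ∀ (ν : Measure α), IsProbabilityMeasure ν → Integrable f ν := fun ν hν =>
    (integrable_const C).mono' hf.aestronglyMeasurable (ae_of_all _ hbn)
  have hgp : Measurable fun y => ENNReal.ofReal (f y) := hf.ennreal_ofReal
  have hgn : Measurable fun y => ENNReal.ofReal (-f y) := hf.neg.ennreal_ofReal
  have hAp : Measurable fun x => ∫⁻ y, ENNReal.ofReal (f y) ∂(κ x) :=
    (Measure.measurable_lintegral hgp).comp hκ
  have hAn : Measurable fun x => ∫⁻ y, ENNReal.ofReal (-f y) ∂(κ x) :=
    (Measure.measurable_lintegral hgn).comp hκ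
  have hboundp : ∀ x, (∫⁻ y, ENNReal.ofReal (f y) ∂(κ x)) ≤ ENNReal.ofReal C := by
    intro x
    calc ∫⁻ y, ENNReal.ofReal (f y) ∂(κ x) ≤ ∫⁻ _, ENNReal.ofReal C ∂(κ x) :=
      lintegral_mono (fun y => ENNReal.ofReal_le_ofReal (le_trans (le_abs_self _) (hb y)))
    _ = ENNReal.ofReal C := by simp [(hκp x).measure_univ]
  have hboundn : ∀ x, (∫⁻ y, ENNReal.ofReal (-f y) ∂(κ x)) ≤ ENNReal.ofReal C := by
    intro x
    calc ∫⁻ y, ENNReal.ofReal (-f y) ∂(κ x) ≤ ∫⁻ _, ENNReal.ofReal C ∂(κ x) :=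
      lintegral_mono (fun y => ENNReal.ofReal_le_ofReal (le_trans (neg_le_abs _) (hb y)))
    _ = ENNReal.ofReal C := by simp [(hκp x).measure_univ]
  have hlt : ∀ x, (∫⁻ y, ENNReal.ofReal (f y) ∂(κ x)) < ∞ :=
    fun x => lt_of_le_of_lt (hboundp x) ENNReal.ofReal_lt_top
  have hltn : ∀ x, (∫⁻ y, ENNReal.ofReal (-f y) ∂(κ x)) < ∞ :=
    fun x => lt_of_le_of_lt (hboundn x) ENNReal.ofReal_lt_top
  -- inner integral decomposition
  have hinner : ∀ x, ∫ y, f y ∂(κ x) =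
      (∫⁻ y, ENNReal.ofReal (f y) ∂(κ x)).toReal -
      (∫⁻ y, ENNReal.ofReal (-f y) ∂(κ x)).toReal := fun x =>
    integral_eq_lintegral_pos_part_sub_lintegral_neg_part (hint (κ x) (hκp x))
  -- integrability of the toReal parts
  have hintp : Integrable (fun x => (∫⁻ y, ENNReal.ofReal (f y) ∂(κ x)).toReal) μ := by
    refine (integrable_const C).mono' hAp.ennreal_toReal.aestronglyMeasurable
      (ae_of_all _ (fun x => ?_))
    rw [Real.norm_eq_abs, abs_of_nonneg ENNReal.toReal_nonneg]
    exact ENNReal.toReal_le_of_le_ofReal hC (hboundp x)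
  have hintn : Integrable (fun x => (∫⁻ y, ENNReal.ofReal (-f y) ∂(κ x)).toReal) μ := by
    refine (integrable_const C).mono' hAn.ennreal_toReal.aestronglyMeasurable
      (ae_of_all _ (fun x => ?_))
    rw [Real.norm_eq_abs, abs_of_nonneg ENNReal.toReal_nonneg]
    exact ENNReal.toReal_le_of_le_ofReal hC (hboundn x)
  calc ∫ x, f x ∂(μ.bind κ)
      = (∫⁻ y, ENNReal.ofReal (f y) ∂(μ.bind κ)).toReal -
        (∫⁻ y, ENNReal.ofReal (-f y) ∂(μ.bind κ)).toReal :=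
        integral_eq_lintegral_pos_part_sub_lintegral_neg_part (hint _ this)
    _ = (∫⁻ x, ∫⁻ y, ENNReal.ofReal (f y) ∂(κ x) ∂μ).toReal -
        (∫⁻ x, ∫⁻ y, ENNReal.ofReal (-f y) ∂(κ x) ∂μ).toReal := by
        rw [Measure.lintegral_bind hκ.aemeasurable hgp.aemeasurable, Measure.lintegral_bind hκ.aemeasurable hgn.aemeasurable]
    _ = (∫ x, (∫⁻ y, ENNReal.ofReal (f y) ∂(κ x)).toReal ∂μ) -
        (∫ x, (∫⁻ y, ENNReal.ofReal (-f y) ∂(κ x)).toReal ∂μ) := by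
        rw [integral_toReal hAp.aemeasurable (ae_of_all _ hlt),
          integral_toReal hAn.aemeasurable (ae_of_all _ hltn)]
    _ = ∫ x, ((∫⁻ y, ENNReal.ofReal (f y) ∂(κ x)).toReal -
          (∫⁻ y, ENNReal.ofReal (-f y) ∂(κ x)).toReal) ∂μ := (integral_sub hintp hintn).symm
    _ = ∫ x, ∫ y, f y ∂(κ x) ∂μ := by
        exact integral_congr_ae (ae_of_all _ (fun x => (hinner x).symm))

section Disc
variable (N n : ℕ)

/-- the discrete fragment count -/
noncomputable def cfM (p : Fin N × Fin N) (y : Fin N → ℝ) : ℕ := ⌊(n : ℝ) * (y p.1 + y p.2)⌋₊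

/-- the point measure summand of the discrete kernel -/
noncomputable def cfDterm (p : Fin N × Fin N) (m : ℕ) (y : Fin N → ℝ) : Measure (Fin N → ℝ) :=
  if m = 0 then Measure.dirac y
    else ((m : ℝ≥0∞))⁻¹ • ∑ k ∈ Finset.range m,
      Measure.dirac (Function.update (Function.update y p.1 ((k : ℝ) / n)) p.2
        (y p.1 + y p.2 - (k : ℝ) / n))

lemma cfKd_eq (y : Fin N → ℝ) : cfKd N n y =
    ((N : ℝ≥0∞) * ((N : ℝ≥0∞) - 1))⁻¹ •
      ∑ p ∈ cfPairs N, cfDterm N n p (cfM N n p y) y := rfl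

lemma measurable_cfM (p : Fin N × Fin N) : Measurable (cfM N n p) :=
  (measurable_const.mul ((measurable_pi_apply p.1).add (measurable_pi_apply p.2))).nat_floor

lemma measurable_cfDterm_coe (p : Fin N × Fin N) (m : ℕ) {s : Set (Fin N → ℝ)}
    (hs : MeasurableSet s) : Measurable (fun y => cfDterm N n p m y s) := by
  classical
  unfold cfDterm
  split_ifs with hm
  · simp only [Measure.dirac_apply' _ hs]
    exact measurable_one.indicator hs
  · simp only [Measure.smul_apply, Measure.finset_sum_apply, smul_eq_mul]
    refine Measurable.const_mul (Finset.measurable_sum _ (fun k _ => ?_)) _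
    simp only [Measure.dirac_apply' _ hs]
    refine Measurable.indicator measurable_one ?_
    have hz : Measurable fun y : Fin N → ℝ =>
        Function.update (Function.update y p.1 ((k : ℝ) / n)) p.2
          (y p.1 + y p.2 - (k : ℝ) / n) := by
      refine measurable_pi_lambda _ (fun l => ?_)
      rcases eq_or_ne l p.2 with rfl | hl2
      · simp only [Function.update_self]
        exact ((measurable_pi_apply p.1).add (measurable_pi_apply p.2)).sub measurable_const
      · rcases eq_or_ne l p.1 with rfl | hl1
        · simp only [Function.update_of_ne hl2]
          simp only [Function.update_self]
          exact measurable_const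
        · simp only [Function.update_of_ne hl2, Function.update_of_ne hl1]
          exact measurable_pi_apply l
    exact hz hs

lemma measurable_cfKd : Measurable (cfKd N n) := by
  classical
  apply Measure.measurable_of_measurable_coe
  intro s hs
  have heq : (fun y => cfKd N n y s) = fun y =>
      ((N : ℝ≥0∞) * ((N : ℝ≥0∞) - 1))⁻¹ *
        ∑ p ∈ cfPairs N, cfDterm N n p (cfM N n p y) y s := by
    funext y
    rw [cfKd_eq, Measure.smul_apply, Measure.finset_sum_apply, smul_eq_mul]
  rw [heq]
  refine Measurable.const_mul (Finset.measurable_sum _ (fun p _ => ?_)) _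
  have : (fun y => cfDterm N n p (cfM N n p y) y s)
      = (fun q : (Fin N → ℝ) × ℕ => cfDterm N n p q.2 q.1 s) ∘ (fun y => (y, cfM N n p y)) := rfl
  rw [this]
  exact (measurable_from_prod_countable_left
    (fun m => measurable_cfDterm_coe N n p m hs)).comp
    (measurable_id.prodMk (measurable_cfM N n p))
end Disc


section Disc2
variable (N n : ℕ)

lemma cfDterm_univ (p : Fin N × Fin N) (m : ℕ) (y : Fin N → ℝ) :
    cfDterm N n p m y Set.univ = 1 := by
  unfold cfDterm
  split_ifs with hm
  · simp
  · rw [Measure.smul_apply, Measure.finset_sum_apply]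
    simp only [Measure.dirac_apply_of_mem (Set.mem_univ _), Finset.sum_const,
      Finset.card_range, nsmul_eq_mul, mul_one, smul_eq_mul]
    exact ENNReal.inv_mul_cancel (by exact_mod_cast hm) (ENNReal.natCast_ne_top m)

lemma cfKd_prob (hN : 2 ≤ N) (y : Fin N → ℝ) : IsProbabilityMeasure (cfKd N n y) := by
  constructor
  rw [cfKd_eq, Measure.smul_apply, Measure.finset_sum_apply, smul_eq_mul]
  rw [Finset.sum_congr rfl (fun p _ => cfDterm_univ N n p (cfM N n p y) y)]
  rw [Finset.sum_const, nsmul_eq_mul, mul_one]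
  exact cfFactor_mul N hN

lemma measurableSet_discSimplex : MeasurableSet (discSimplex N n) := by
  have : discSimplex N n = stdSimplex ℝ (Fin N) ∩ ⋂ i, ⋃ k : ℕ,
      {x : Fin N → ℝ | x i = (k : ℝ) / n} := by
    ext x
    simp [discSimplex, Set.mem_iInter, Set.mem_iUnion]
  rw [this]
  refine (isClosed_stdSimplex ℝ (Fin N)).measurableSet.inter
    (MeasurableSet.iInter (fun i => MeasurableSet.iUnion (fun k => ?_)))
  exact measurableSet_eq_fun (measurable_pi_apply i) measurable_const

lemma discSimplex_subset : discSimplex N n ⊆ stdSimplex ℝ (Fin N) := fun _ hx => hx.1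

lemma cfKd_supp (hn : 1 ≤ n) {y : Fin N → ℝ} (hy : y ∈ discSimplex N n) :
    cfKd N n y (discSimplex N n)ᶜ = 0 := by
  classical
  rw [cfKd_eq, Measure.smul_apply, Measure.finset_sum_apply]
  have hterm : ∀ p ∈ cfPairs N, cfDterm N n p (cfM N n p y) y (discSimplex N n)ᶜ = 0 := by
    intro p hp
    have hij : p.1 ≠ p.2 := by simpa using (Finset.mem_filter.1 hp).2
    obtain ⟨hyS, hyd⟩ := hy
    obtain ⟨a, ha⟩ := hyd p.1
    obtain ⟨b, hb⟩ := hyd p.2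
    have hn0 : (n : ℝ) ≠ 0 := by positivity
    have hsum : y p.1 + y p.2 = ((a + b : ℕ) : ℝ) / n := by
      rw [ha, hb]; push_cast; ring
    have hM : cfM N n p y = a + b := by
      unfold cfM
      rw [hsum, mul_div_cancel₀ _ hn0]
      exact_mod_cast Nat.floor_natCast _
    unfold cfDterm
    rw [hM]
    split_ifs with hm
    · rw [Measure.dirac_apply' _ (measurableSet_discSimplex N n).compl]
      exact Set.indicator_of_notMem (by simp; exact ⟨hyS, hyd⟩) _
    · rw [Measure.smul_apply, Measure.finset_sum_apply]
      have hz : ∀ k ∈ Finset.range (a + b),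
          Measure.dirac (Function.update (Function.update y p.1 ((k : ℝ) / n)) p.2
            (y p.1 + y p.2 - (k : ℝ) / n)) (discSimplex N n)ᶜ = 0 := by
        intro k hk
        have hk' : k ≤ a + b := le_of_lt (Finset.mem_range.1 hk)
        have hzmem : Function.update (Function.update y p.1 ((k : ℝ) / n)) p.2
            (y p.1 + y p.2 - (k : ℝ) / n) ∈ discSimplex N n := by
          constructor
          · refine updtwo_mem_simplex hij hyS (by positivity) ?_
            rw [hsum]
            apply div_le_div_of_nonneg_right ?_ ?_ |>.trans_eq rfl
            · exact_mod_cast hk'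
            · positivity
          · intro l
            rcases eq_or_ne l p.2 with rfl | hl2
            · refine ⟨a + b - k, ?_⟩
              rw [Function.update_self, hsum]
              rw [Nat.cast_sub hk']
              ring
            · rcases eq_or_ne l p.1 with rfl | hl1
              · exact ⟨k, by rw [Function.update_of_ne hl2, Function.update_self]⟩
              · rw [Function.update_of_ne hl2, Function.update_of_ne hl1]
                exact hyd l
        rw [Measure.dirac_apply' _ (measurableSet_discSimplex N n).compl]
        exact Set.indicator_of_notMem (by simpa using hzmem) _
      rw [Finset.sum_congr rfl hz]
      simp
  rw [Finset.sum_congr rfl hterm]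
  simp
end Disc2


section Disc3
variable (N n : ℕ)

/-- the discrete splitting point -/
noncomputable def cfZ (p : Fin N × Fin N) (k : ℕ) (y : Fin N → ℝ) : Fin N → ℝ :=
  Function.update (Function.update y p.1 ((k : ℝ) / n)) p.2 (y p.1 + y p.2 - (k : ℝ) / n)

lemma measurable_cfZ (p : Fin N × Fin N) (k : ℕ) : Measurable (cfZ N n p k) := by
  refine measurable_pi_lambda _ (fun l => ?_)
  unfold cfZ
  rcases eq_or_ne l p.2 with rfl | hl2
  · simp only [Function.update_self]
    exact ((measurable_pi_apply p.1).add (measurable_pi_apply p.2)).sub measurable_const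
  · rcases eq_or_ne l p.1 with rfl | hl1
    · simp only [Function.update_of_ne hl2, Function.update_self]
      exact measurable_const
    · simp only [Function.update_of_ne hl2, Function.update_of_ne hl1]
      exact measurable_pi_apply l

/-- the value of the integral of `f` against `cfDterm` -/
noncomputable def cfG (f : (Fin N → ℝ) → ℝ) (p : Fin N × Fin N) (m : ℕ) (y : Fin N → ℝ) : ℝ :=
  if m = 0 then f y else (m : ℝ)⁻¹ * ∑ k ∈ Finset.range m, f (cfZ N n p k y)

lemma cfDterm_prob (p : Fin N × Fin N) (m : ℕ) (y : Fin N → ℝ) :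
    IsProbabilityMeasure (cfDterm N n p m y) := ⟨cfDterm_univ N n p m y⟩

lemma integral_cfDterm (f : BoundedContinuousFunction (Fin N → ℝ) ℝ) (p : Fin N × Fin N)
    (m : ℕ) (y : Fin N → ℝ) :
    ∫ z, f z ∂(cfDterm N n p m y) = cfG N n f p m y := by
  unfold cfDterm cfG
  split_ifs with hm
  · exact integral_dirac _ _
  · rw [integral_smul_measure, integral_finset_sum_measure]
    · simp only [integral_dirac, smul_eq_mul]
      congr 1
      rw [ENNReal.toReal_inv]
      simp
    · intro k _
      exact f.integrable _

lemma integral_cfKd (hN : 2 ≤ N) (f : BoundedContinuousFunction (Fin N → ℝ) ℝ) (y : Fin N → ℝ) :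
    ∫ z, f z ∂(cfKd N n y) = (((N * N - N : ℕ) : ℝ))⁻¹ *
      ∑ p ∈ cfPairs N, cfG N n f p (cfM N n p y) y := by
  rw [cfKd_eq, integral_smul_measure, cfFactor_toReal N hN, smul_eq_mul]
  congr 1
  rw [integral_finset_sum_measure]
  · exact Finset.sum_congr rfl (fun p _ => integral_cfDterm N n f p _ y)
  · intro p _
    haveI := cfDterm_prob N n p (cfM N n p y) y
    exact f.integrable _

lemma abs_cfG_le (f : BoundedContinuousFunction (Fin N → ℝ) ℝ) (p : Fin N × Fin N) (m : ℕ)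
    (y : Fin N → ℝ) : |cfG N n f p m y| ≤ ‖f‖ := by
  unfold cfG
  split_ifs with hm
  · simpa using f.norm_coe_le_norm y
  · have hm' : 0 < (m : ℝ) := by exact_mod_cast Nat.pos_of_ne_zero hm
    rw [abs_mul, abs_inv, abs_of_nonneg hm'.le]
    calc (m : ℝ)⁻¹ * |∑ k ∈ Finset.range m, f (cfZ N n p k y)|
        ≤ (m : ℝ)⁻¹ * ∑ k ∈ Finset.range m, ‖f‖ := by
          refine mul_le_mul_of_nonneg_left ?_ (by positivity)
          refine (Finset.abs_sum_le_sum_abs _ _).trans ?_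
          exact Finset.sum_le_sum (fun k _ => by simpa using f.norm_coe_le_norm _)
      _ = ‖f‖ := by
          rw [Finset.sum_const, Finset.card_range, nsmul_eq_mul, ← mul_assoc,
            inv_mul_cancel₀ hm'.ne', one_mul]

lemma abs_integral_cfKd_le (hN : 2 ≤ N) (f : BoundedContinuousFunction (Fin N → ℝ) ℝ)
    (y : Fin N → ℝ) : |∫ z, f z ∂(cfKd N n y)| ≤ ‖f‖ := by
  rw [integral_cfKd N n hN f y]
  have hpos : (0:ℝ) < ((N * N - N : ℕ) : ℝ) := by
    have hlt : N < N * N := by nlinarith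
    exact_mod_cast Nat.sub_pos_of_lt hlt
  rw [abs_mul, abs_inv, abs_of_nonneg hpos.le]
  calc (((N * N - N : ℕ) : ℝ))⁻¹ * |∑ p ∈ cfPairs N, cfG N n f p (cfM N n p y) y|
      ≤ (((N * N - N : ℕ) : ℝ))⁻¹ * ∑ p ∈ cfPairs N, ‖f‖ := by
        refine mul_le_mul_of_nonneg_left ?_ (by positivity)
        exact (Finset.abs_sum_le_sum_abs _ _).trans
          (Finset.sum_le_sum (fun p _ => abs_cfG_le N n f p _ y))
    _ = ‖f‖ := by
        rw [Finset.sum_const, cfPairs_card, nsmul_eq_mul, ← mul_assoc,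
          inv_mul_cancel₀ hpos.ne', one_mul]

lemma measurable_integral_cfKd (hN : 2 ≤ N) (f : BoundedContinuousFunction (Fin N → ℝ) ℝ) :
    Measurable (fun y => ∫ z, f z ∂(cfKd N n y)) := by
  have heq : (fun y => ∫ z, f z ∂(cfKd N n y)) = fun y => (((N * N - N : ℕ) : ℝ))⁻¹ *
      ∑ p ∈ cfPairs N, cfG N n f p (cfM N n p y) y := funext (integral_cfKd N n hN f)
  rw [heq]
  refine Measurable.const_mul (Finset.measurable_sum _ (fun p _ => ?_)) _
  have : (fun y => cfG N n f p (cfM N n p y) y)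
      = (fun q : (Fin N → ℝ) × ℕ => cfG N n f p q.2 q.1) ∘ (fun y => (y, cfM N n p y)) := rfl
  rw [this]
  refine (measurable_from_prod_countable_left (fun m => ?_)).comp
    (measurable_id.prodMk (measurable_cfM N n p))
  show Measurable fun x : Fin N → ℝ => cfG N n (⇑f) p m x
  unfold cfG
  split_ifs with hm
  · exact f.continuous.measurable
  · exact Measurable.const_mul (Finset.measurable_sum _ (fun k _ =>
      f.continuous.measurable.comp (measurable_cfZ N n p k))) _
end Disc3


section Approx
variable (N n : ℕ)

lemma aux_hM {n : ℕ} (hn : 1 ≤ n) {y : Fin N → ℝ} (p : Fin N × Fin N)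
    {a b : ℕ} (ha : y p.1 = (a : ℝ) / n) (hb : y p.2 = (b : ℝ) / n) :
    cfM N n p y = a + b ∧ y p.1 + y p.2 = ((a + b : ℕ) : ℝ) / n := by
  have hn0 : (n : ℝ) ≠ 0 := (Nat.cast_pos.mpr hn).ne'
  have hsum : y p.1 + y p.2 = ((a + b : ℕ) : ℝ) / n := by
    rw [ha, hb]; push_cast; ring
  refine ⟨?_, hsum⟩
  unfold cfM
  rw [hsum, mul_div_cancel₀ _ hn0]
  exact_mod_cast Nat.floor_natCast _

lemma cfPair_approx {n : ℕ} (hn : 1 ≤ n) (f : BoundedContinuousFunction (Fin N → ℝ) ℝ)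
    {p : Fin N × Fin N} (hij : p.1 ≠ p.2) {ε δ : ℝ} (hε : 0 < ε) (hδ : 0 < δ)
    (hmod : ∀ z ∈ stdSimplex ℝ (Fin N), ∀ w ∈ stdSimplex ℝ (Fin N),
      dist z w < δ → dist (f z) (f w) < ε)
    (hnδ : 1 / (n : ℝ) < δ) {y : Fin N → ℝ} (hy : y ∈ discSimplex N n) :
    |cfG N n f p (cfM N n p y) y - ∫ u in Set.Icc (0:ℝ) 1, f (cfT N p.1 p.2 u y)| ≤ ε := by
  obtain ⟨hyS, hyd⟩ := hy
  obtain ⟨a, ha⟩ := hyd p.1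
  obtain ⟨b, hb⟩ := hyd p.2
  have hnR : (0:ℝ) < n := Nat.cast_pos.mpr hn
  have hn0 : (n : ℝ) ≠ 0 := hnR.ne'
  obtain ⟨hM, hsum⟩ := aux_hM N hn p ha hb
  rw [hM]
  rcases Nat.eq_zero_or_pos (a + b) with hm0 | hmpos
  · -- degenerate case : both coordinates vanish
    have ha0 : a = 0 := by omega
    have hb0 : b = 0 := by omega
    have hyi : y p.1 = 0 := by rw [ha, ha0]; simp
    have hyj : y p.2 = 0 := by rw [hb, hb0]; simp
    have hT : ∀ u : ℝ, cfT N p.1 p.2 u y = y := by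
      intro u; funext l
      rw [cfT_apply N p.1 p.2 hij]
      split_ifs with hl1 hl2
      · rw [hl1, hyi, hyj]; ring
      · rw [hl2, hyi, hyj]; ring
      · rfl
    have hint : ∫ u in Set.Icc (0:ℝ) 1, f (cfT N p.1 p.2 u y) = f y := by
      simp only [hT]
      rw [setIntegral_const, Real.volume_real_Icc]
      norm_num
    rw [hm0, hint]
    simp [cfG, hε.le]
  · -- main case
    set m := a + b with hmdef
    have hmne : m ≠ 0 := Nat.pos_iff_ne_zero.mp hmpos
    have hmR : (0:ℝ) < m := Nat.cast_pos.mpr hmpos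
    have hm0' : (m : ℝ) ≠ 0 := hmR.ne'
    have hs : y p.1 + y p.2 = (m : ℝ) / n := hsum
    have hsnn : 0 ≤ y p.1 + y p.2 := by rw [hs]; positivity
    set g : ℝ → ℝ := fun u => f (cfT N p.1 p.2 u y) with hg
    have hgc : Continuous g := f.continuous.comp ((continuous_cfT N p.1 p.2 hij).comp
      (continuous_id.prodMk continuous_const))
    set aa : ℕ → ℝ := fun k => (k : ℝ) / m with haa
    have hsplit : ∑ k ∈ Finset.range m, ∫ u in aa k..aa (k+1), g u = ∫ u in (aa 0)..(aa m), g u :=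
      intervalIntegral.sum_integral_adjacent_intervals
        (fun k _ => (hgc.intervalIntegrable _ _))
    have ha0 : aa 0 = 0 := by simp [haa]
    have ham : aa m = 1 := by rw [haa]; field_simp
    have h01 : ∫ u in (0:ℝ)..1, g u = ∫ u in (aa 0)..(aa m), g u := by rw [ha0, ham]
    have hIcc : ∫ u in Set.Icc (0:ℝ) 1, g u = ∑ k ∈ Finset.range m, ∫ u in aa k..aa (k+1), g u := by
      rw [MeasureTheory.integral_Icc_eq_integral_Ioc,
        ← intervalIntegral.integral_of_le zero_le_one, h01, ← hsplit]
    have hcfG : cfG N n (⇑f) p m y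
        = ∑ k ∈ Finset.range m, (m : ℝ)⁻¹ * f (cfZ N n p k y) := by
      rw [cfG, if_neg hmne, Finset.mul_sum]
    rw [hcfG, hIcc, ← Finset.sum_sub_distrib]
    refine (Finset.abs_sum_le_sum_abs _ _).trans ?_
    have hbound : ∀ k ∈ Finset.range m,
        |(m : ℝ)⁻¹ * f (cfZ N n p k y) - ∫ u in aa k..aa (k+1), g u| ≤ ε * (m : ℝ)⁻¹ := by
      intro k hk
      have hkm : k < m := Finset.mem_range.1 hk
      have hkm' : ((k : ℝ) + 1) ≤ m := by exact_mod_cast hkm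
      have hle : aa k ≤ aa (k+1) := by
        simp only [haa]
        gcongr
        all_goals push_cast; linarith
      have hlen : aa (k+1) - aa k = (m : ℝ)⁻¹ := by
        rw [haa]; push_cast; field_simp; ring
      have hZS : cfZ N n p k y ∈ stdSimplex ℝ (Fin N) := by
        refine updtwo_mem_simplex hij hyS (by positivity) ?_
        rw [hs]
        gcongr
        all_goals exact_mod_cast hkm.le
      have hptw : ∀ u ∈ Set.uIoc (aa k) (aa (k+1)), ‖g u - f (cfZ N n p k y)‖ ≤ ε := by
        intro u hu
        rw [Set.uIoc_of_le hle] at hu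
        obtain ⟨hu1, hu2⟩ := hu
        have hu0 : 0 ≤ u := le_of_lt (lt_of_le_of_lt (by positivity : (0:ℝ) ≤ aa k) hu1)
        have hu1' : u ≤ 1 := by
          refine hu2.trans ?_
          rw [haa, div_le_one hmR]
          push_cast; linarith
        have hTS : cfT N p.1 p.2 u y ∈ stdSimplex ℝ (Fin N) :=
          cfT_mem_simplex hij ⟨hu0, hu1'⟩ hyS
        have hus1 : (k : ℝ) / n ≤ u * (y p.1 + y p.2) := by
          have h1 : aa k * (y p.1 + y p.2) ≤ u * (y p.1 + y p.2) :=
            mul_le_mul_of_nonneg_right hu1.le hsnn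
          calc (k : ℝ) / n = aa k * (y p.1 + y p.2) := by
                rw [haa, hs]; field_simp
          _ ≤ _ := h1
        have hus2 : u * (y p.1 + y p.2) ≤ ((k : ℝ) + 1) / n := by
          have h1 : u * (y p.1 + y p.2) ≤ aa (k+1) * (y p.1 + y p.2) :=
            mul_le_mul_of_nonneg_right hu2 hsnn
          refine h1.trans_eq ?_
          rw [haa, hs]; push_cast; field_simp
        have hdist : dist (cfT N p.1 p.2 u y) (cfZ N n p k y) ≤ 1 / n := by
          rw [dist_pi_le_iff (by positivity)]
          intro l
          rw [show cfT N p.1 p.2 u y l = if l = p.2 then (1 - u) * (y p.1 + y p.2)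
            else if l = p.1 then u * (y p.1 + y p.2) else y l from cfT_apply N p.1 p.2 hij u y l]
          unfold cfZ
          rcases eq_or_ne l p.2 with rfl | hl2
          · rw [if_pos rfl, Function.update_self, Real.dist_eq]
            have hval : (1 - u) * (y p.1 + y p.2) - (y p.1 + y p.2 - (k : ℝ) / n)
                = (k : ℝ) / n - u * (y p.1 + y p.2) := by ring
            rw [hval]
            rw [abs_le]
            have h1n : (0:ℝ) ≤ 1 / n := by positivity
            have hsp : ((k:ℝ) + 1) / n = (k:ℝ) / n + 1 / n := by ring
            constructor
            · linarith [hus2]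
            · linarith [hus1]
          · rw [if_neg hl2, Function.update_of_ne hl2]
            rcases eq_or_ne l p.1 with rfl | hl1
            · rw [if_pos rfl, Function.update_self, Real.dist_eq, abs_le]
              have h1n : (0:ℝ) ≤ 1 / n := by positivity
              have hsp : ((k:ℝ) + 1) / n = (k:ℝ) / n + 1 / n := by ring
              constructor
              · linarith [hus1]
              · linarith [hus2]
            · rw [if_neg hl1, Function.update_of_ne hl1]
              simp only [dist_self]
              positivity
        have := hmod _ hTS _ hZS (lt_of_le_of_lt hdist hnδ)
        rw [Real.dist_eq] at this
        exact le_of_lt (by simpa [hg, Real.norm_eq_abs] using this)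
      have heq : (m : ℝ)⁻¹ * f (cfZ N n p k y) - ∫ u in aa k..aa (k+1), g u
          = - ∫ u in aa k..aa (k+1), (g u - f (cfZ N n p k y)) := by
        rw [intervalIntegral.integral_sub (hgc.intervalIntegrable _ _)
          (intervalIntegrable_const), intervalIntegral.integral_const, hlen, smul_eq_mul]
        ring
      rw [heq, abs_neg, ← Real.norm_eq_abs]
      refine (intervalIntegral.norm_integral_le_of_norm_le_const hptw).trans_eq ?_
      rw [hlen]
      rw [abs_of_nonneg (by positivity)]
    refine (Finset.sum_le_sum hbound).trans_eq ?_
    rw [Finset.sum_const, Finset.card_range, nsmul_eq_mul]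
    field_simp

end Approx


lemma cfKd_cfK_approx (N : ℕ) (hN : 2 ≤ N) (f : BoundedContinuousFunction (Fin N → ℝ) ℝ)
    {ε : ℝ} (hε : 0 < ε) :
    ∃ M : ℕ, 1 ≤ M ∧ ∀ n, M ≤ n → ∀ y ∈ discSimplex N n,
      |∫ z, f z ∂(cfKd N n y) - ∫ z, f z ∂(cfK N y)| ≤ ε := by
  have huc : UniformContinuousOn f (stdSimplex ℝ (Fin N)) :=
    (isCompact_stdSimplex ℝ (Fin N)).uniformContinuousOn_of_continuous f.continuous.continuousOn
  rw [Metric.uniformContinuousOn_iff] at huc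
  obtain ⟨δ, hδ, hmod⟩ := huc ε hε
  refine ⟨⌈1/δ⌉₊ + 1, le_add_self, fun n hn y hy => ?_⟩
  have hn1 : 1 ≤ n := le_trans (Nat.le_add_left 1 _) hn
  have hnR : (0:ℝ) < n := Nat.cast_pos.mpr hn1
  have hnδ : 1 / (n : ℝ) < δ := by
    have h1 : (⌈1/δ⌉₊ : ℝ) + 1 ≤ (n : ℝ) := by exact_mod_cast hn
    have h2 : 1/δ < (n : ℝ) := lt_of_le_of_lt (Nat.le_ceil _) (by linarith)
    rw [div_lt_iff₀ hnR]
    have h3 : δ * (1/δ) = 1 := by field_simp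
    nlinarith
  rw [integral_cfKd N n hN f y, integral_cfK N hN f y, ← mul_sub, ← Finset.sum_sub_distrib]
  have hpos : (0:ℝ) < ((N * N - N : ℕ) : ℝ) := by
    have hlt : N < N * N := by nlinarith
    exact_mod_cast Nat.sub_pos_of_lt hlt
  rw [abs_mul, abs_inv, abs_of_nonneg hpos.le]
  calc (((N * N - N : ℕ) : ℝ))⁻¹ * |∑ p ∈ cfPairs N,
        (cfG N n (⇑f) p (cfM N n p y) y - ∫ u in Set.Icc (0:ℝ) 1, f (cfT N p.1 p.2 u y))|
      ≤ (((N * N - N : ℕ) : ℝ))⁻¹ * ∑ p ∈ cfPairs N, ε := by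
        refine mul_le_mul_of_nonneg_left ?_ (by positivity)
        refine (Finset.abs_sum_le_sum_abs _ _).trans (Finset.sum_le_sum (fun p hp => ?_))
        have hij : p.1 ≠ p.2 := by simpa using (Finset.mem_filter.1 hp).2
        exact cfPair_approx N hn1 f hij hε hδ (fun z hz w hw hd => hmod z hz w hw hd) hnδ hy
    _ = ε := by
        rw [Finset.sum_const, cfPairs_card, nsmul_eq_mul, ← mul_assoc,
          inv_mul_cancel₀ hpos.ne', one_mul]

lemma evolve_d_props (N n : ℕ) (hN : 2 ≤ N) (hn : 1 ≤ n) (μ : Measure (Fin N → ℝ))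
    (hp : IsProbabilityMeasure μ) (hs : μ (discSimplex N n) = 1) (k : ℕ) :
    IsProbabilityMeasure (evolve (cfKd N n) k μ) ∧
      (evolve (cfKd N n) k μ) (discSimplex N n) = 1 := by
  induction k with
  | zero => exact ⟨hp, hs⟩
  | succ k ih =>
    obtain ⟨ihp, ihs⟩ := ih
    haveI := ihp
    have hprob : IsProbabilityMeasure ((evolve (cfKd N n) k μ).bind (cfKd N n)) :=
      bind_prob _ _ (measurable_cfKd N n) (cfKd_prob N n hN)
    have hsupp : ((evolve (cfKd N n) k μ).bind (cfKd N n)) (discSimplex N n)ᶜ = 0 :=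
      bind_supp _ _ (measurable_cfKd N n) (measurableSet_discSimplex N n) ihs
        (fun x hx => cfKd_supp N n hn hx)
    refine ⟨hprob, ?_⟩
    haveI := hprob
    show ((evolve (cfKd N n) k μ).bind (cfKd N n)) (discSimplex N n) = 1
    rwa [← prob_compl_eq_zero_iff (measurableSet_discSimplex N n)]

lemma evolve_c_props (N : ℕ) (hN : 2 ≤ N) (μ : Measure (Fin N → ℝ))
    (hp : IsProbabilityMeasure μ) (k : ℕ) :
    IsProbabilityMeasure (evolve (cfK N) k μ) := by
  induction k with
  | zero => exact hp
  | succ k ih =>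
    haveI := ih
    show IsProbabilityMeasure ((evolve (cfK N) k μ).bind (cfK N))
    exact bind_prob _ _ (measurable_cfK N) (cfK_prob N hN)


theorem discrete_to_continuous_marginals (N : ℕ) (hN : 2 ≤ N)
    (μn : ℕ → Measure (Fin N → ℝ)) (μ₀ : Measure (Fin N → ℝ))
    (hprobn : ∀ n, 1 ≤ n → IsProbabilityMeasure (μn n))
    (hsuppn : ∀ n, 1 ≤ n → μn n (discSimplex N n) = 1)
    (hprob0 : IsProbabilityMeasure μ₀)
    (hsupp0 : μ₀ (stdSimplex ℝ (Fin N)) = 1)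
    (hconv : ∀ f : BoundedContinuousFunction (Fin N → ℝ) ℝ,
      Tendsto (fun n => ∫ x, f x ∂(μn n)) atTop (𝓝 (∫ x, f x ∂μ₀))) :
    ∀ k : ℕ, ∀ f : BoundedContinuousFunction (Fin N → ℝ) ℝ,
      Tendsto (fun n => ∫ x, f x ∂(evolve (cfKd N n) k (μn n))) atTop
        (𝓝 (∫ x, f x ∂(evolve (cfK N) k μ₀))) := by
  intro k
  induction k with
  | zero => intro f; exact hconv f
  | succ k ih =>
    intro f
    set g : BoundedContinuousFunction (Fin N → ℝ) ℝ :=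
      BoundedContinuousFunction.ofNormedAddCommGroup (fun x => ∫ z, f z ∂(cfK N x))
        (continuous_integral_cfK N hN f) ‖f‖ (norm_integral_cfK_le N hN f) with hgdef
    have hgcoe : ∀ x, g x = ∫ z, f z ∂(cfK N x) := fun x => rfl
    have habs : ∀ x, |f x| ≤ ‖f‖ := fun x => by
      simpa [Real.norm_eq_abs] using f.norm_coe_le_norm x
    -- limit-side identity
    haveI := hprob0
    haveI hν0 : IsProbabilityMeasure (evolve (cfK N) k μ₀) := evolve_c_props N hN μ₀ hprob0 k
    have h2 : ∫ x, f x ∂(evolve (cfK N) (k+1) μ₀) = ∫ y, g y ∂(evolve (cfK N) k μ₀) := by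
      show ∫ x, f x ∂((evolve (cfK N) k μ₀).bind (cfK N)) = _
      rw [integral_bind_of_bounded _ _ (measurable_cfK N) (cfK_prob N hN) _
        f.continuous.measurable (norm_nonneg f) habs]
      rfl
    -- sequence-side identity, for n ≥ 1
    have h1 : ∀ n, 1 ≤ n → ∫ x, f x ∂(evolve (cfKd N n) (k+1) (μn n))
        = ∫ y, (∫ z, f z ∂(cfKd N n y)) ∂(evolve (cfKd N n) k (μn n)) := by
      intro n hn
      haveI := (evolve_d_props N n hN hn (μn n) (hprobn n hn) (hsuppn n hn) k).1
      show ∫ x, f x ∂((evolve (cfKd N n) k (μn n)).bind (cfKd N n)) = _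
      rw [integral_bind_of_bounded _ _ (measurable_cfKd N n) (cfKd_prob N n hN) _
        f.continuous.measurable (norm_nonneg f) habs]
    -- the error term tends to zero
    have hd0 : Tendsto (fun n => ∫ x, f x ∂(evolve (cfKd N n) (k+1) (μn n))
        - ∫ y, g y ∂(evolve (cfKd N n) k (μn n))) atTop (𝓝 0) := by
      rw [Metric.tendsto_atTop]
      intro ε hε
      obtain ⟨M, hM1, hM⟩ := cfKd_cfK_approx N hN f (half_pos hε)
      refine ⟨max M 1, fun n hn => ?_⟩
      have hnM : M ≤ n := le_trans (le_max_left _ _) hn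
      have hn1 : 1 ≤ n := le_trans (le_max_right _ _) hn
      obtain ⟨hνp, hνs⟩ := evolve_d_props N n hN hn1 (μn n) (hprobn n hn1) (hsuppn n hn1) k
      haveI := hνp
      rw [Real.dist_eq, sub_zero, h1 n hn1]
      have hint_gd : Integrable (fun y => ∫ z, f z ∂(cfKd N n y)) (evolve (cfKd N n) k (μn n)) := by
        refine (integrable_const ‖f‖).mono'
          (measurable_integral_cfKd N n hN f).aestronglyMeasurable (ae_of_all _ (fun y => ?_))
        simpa [Real.norm_eq_abs] using abs_integral_cfKd_le N n hN f y
      have hint_g : Integrable (fun y => g y) (evolve (cfKd N n) k (μn n)) := g.integrable _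
      rw [← integral_sub hint_gd hint_g]
      have hae : ∀ᵐ y ∂(evolve (cfKd N n) k (μn n)), y ∈ discSimplex N n := by
        have hc : (evolve (cfKd N n) k (μn n)) (discSimplex N n)ᶜ = 0 := by
          rw [prob_compl_eq_zero_iff (measurableSet_discSimplex N n)]
          exact hνs
        exact ae_iff.2 hc
      have hbd := norm_integral_le_of_norm_le_const (μ := evolve (cfKd N n) k (μn n))
        (C := ε/2) (f := fun y => (∫ z, f z ∂(cfKd N n y)) - g y)
        (hae.mono (fun y hy => by
          show ‖(∫ z, f z ∂(cfKd N n y)) - g y‖ ≤ ε/2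
          rw [Real.norm_eq_abs, hgcoe y]
          exact hM n hnM y hy))
      rw [Real.norm_eq_abs] at hbd
      calc |∫ y, ((∫ z, f z ∂(cfKd N n y)) - g y) ∂(evolve (cfKd N n) k (μn n))|
          ≤ ε/2 * ((evolve (cfKd N n) k (μn n)) Set.univ).toReal := hbd
        _ < ε := by
            rw [measure_univ]
            simp only [ENNReal.toReal_one, mul_one]
            exact half_lt_self hε
    -- combine
    have hlim := hd0.add (ih g)
    rw [zero_add] at hlim
    rw [h2]
    refine hlim.congr (fun n => ?_)
    ring
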